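/- Define E(n) = ∑_{k=0}^{⌊(n-1)/2⌋} k·C(n-1-k, k) and let φ = (1+√5)/2. Then E(n) = n·F_{n-1}/(φ² + 1) + O(F_{n-2}); that is, there exists a constant c > 0 such that for all n ≥ 3, |E(n) - n·F_{n-1}/(φ² + 1)| ≤ c·F_{n-2}. -/

import Mathlib

open Real

/-- `E n = ∑_{k=0}^{⌊(n-1)/2⌋} k * C(n-1-k, k)`. -/
def E (n : ℕ) : ℕ := ∑ k ∈ Finset.range ((n - 1) / 2 + 1), k * Nat.choose (n - 1 - k) k

/-- Full-range version of `E`. -/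
def S (n : ℕ) : ℕ := ∑ k ∈ Finset.range (n + 1), k * Nat.choose (n - k) k

lemma T_eq_fib (n : ℕ) :
    ∑ k ∈ Finset.range (n + 1), Nat.choose (n - k) k = Nat.fib (n + 1) := by
  rw [Nat.fib_succ_eq_sum_choose, Finset.Nat.sum_antidiagonal_eq_sum_range_succ_mk]
  rw [← Finset.sum_range_reflect]
  apply Finset.sum_congr rfl
  intro k hk
  simp only [Finset.mem_range] at hk
  congr 1 <;> omega

lemma pascal_aux (n j : ℕ) :
    Nat.choose (n + 1 - j) (j + 1) = Nat.choose (n - j) j + Nat.choose (n - j) (j + 1) := by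
  rcases le_or_gt j n with h | h
  · have : n + 1 - j = (n - j) + 1 := by omega
    rw [this, Nat.choose_succ_succ]
  · obtain ⟨i, rfl⟩ : ∃ i, j = i + 1 := ⟨j - 1, by omega⟩
    have h1 : n + 1 - (i + 1) = 0 := by omega
    have h2 : n - (i + 1) = 0 := by omega
    simp [h1, h2]

lemma S_ext (n M : ℕ) (h : n + 1 ≤ M) :
    S n = ∑ k ∈ Finset.range M, k * Nat.choose (n - k) k := by
  rw [S]
  apply Finset.sum_subset (Finset.range_subset_range.mpr h)
  intro k hk hk'
  simp only [Finset.mem_range, not_lt] at hk'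
  have : n - k = 0 := by omega
  rw [this, Nat.choose_eq_zero_of_lt (by omega), Nat.mul_zero]

lemma T_ext (n M : ℕ) (h : n + 1 ≤ M) :
    ∑ k ∈ Finset.range M, Nat.choose (n - k) k = Nat.fib (n + 1) := by
  rw [← T_eq_fib]
  symm
  apply Finset.sum_subset (Finset.range_subset_range.mpr h)
  intro k hk hk'
  simp only [Finset.mem_range, not_lt] at hk'
  have : n - k = 0 := by omega
  rw [this, Nat.choose_eq_zero_of_lt (by omega)]

lemma S_rec (n : ℕ) : S (n + 2) = S (n + 1) + S n + Nat.fib (n + 1) := by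
  have h1 : S (n + 2) = ∑ j ∈ Finset.range (n + 2), (j + 1) * Nat.choose (n + 1 - j) (j + 1) := by
    rw [S, Finset.sum_range_succ']
    simp
  have h2 : S (n + 1) = ∑ j ∈ Finset.range (n + 2), (j + 1) * Nat.choose (n - j) (j + 1) := by
    rw [S_ext (n + 1) (n + 3) (by omega), Finset.sum_range_succ']
    simp [Nat.succ_sub_succ_eq_sub]
  have h3 : S n = ∑ j ∈ Finset.range (n + 2), j * Nat.choose (n - j) j :=
    S_ext n (n + 2) (by omega)
  have h4 : Nat.fib (n + 1) = ∑ j ∈ Finset.range (n + 2), Nat.choose (n - j) j :=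
    (T_ext n (n + 2) (by omega)).symm
  rw [h1, h2, h3, h4, ← Finset.sum_add_distrib, ← Finset.sum_add_distrib]
  apply Finset.sum_congr rfl
  intro j _
  rw [pascal_aux]
  ring

lemma key (n : ℕ) :
    5 * S n + (n + 1) * Nat.fib n + 2 * Nat.fib (n + 1) = 2 * (n + 1) * Nat.fib (n + 1) := by
  induction n using Nat.twoStepInduction with
  | zero => simp [S]
  | one => simp [S, Finset.sum_range_succ]
  | more n ih1 ih2 =>
    have hs := S_rec n
    have hf1 : Nat.fib (n + 2) = Nat.fib n + Nat.fib (n + 1) := Nat.fib_add_two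
    have hf2 : Nat.fib (n + 3) = Nat.fib (n + 1) + Nat.fib (n + 2) := Nat.fib_add_two
    zify at *
    linear_combination 5 * hs + ih2 + ih1 - (2 * (n : ℤ) + 4) * hf2 + ((n : ℤ) + 1) * hf1

lemma E_eq_S (m : ℕ) : E (m + 1) = S m := by
  rw [E, S]
  simp only [Nat.add_sub_cancel]
  apply Finset.sum_subset
  · apply Finset.range_subset_range.mpr; omega
  · intro k _ hk
    simp only [Finset.mem_range, not_lt] at hk
    rw [Nat.choose_eq_zero_of_lt (by omega), Nat.mul_zero]

lemma pow_bound : ∀ N : ℕ, 3 ≤ N → (N : ℝ) * (2 / 3) ^ N ≤ 1 := by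
  intro N hN
  induction N, hN using Nat.le_induction with
  | base => norm_num
  | succ n hn ih =>
    have h1 : (0:ℝ) < (2/3:ℝ) ^ n := by positivity
    have hn' : (3:ℝ) ≤ n := by exact_mod_cast hn
    push_cast
    rw [pow_succ]
    nlinarith

theorem E_asymptotic :
    ∃ c : ℝ, 0 < c ∧ ∀ n : ℕ, 3 ≤ n →
      |(E n : ℝ) - (n : ℝ) * (Nat.fib n : ℝ) / (((1 + Real.sqrt 5) / 2) ^ 2 + 1)|
        ≤ c * (Nat.fib (n - 1) : ℝ) := by
  refine ⟨1, one_pos, ?_⟩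
  intro n hn
  obtain ⟨m, rfl⟩ : ∃ m, n = m + 1 := ⟨n - 1, by omega⟩
  have hm : 2 ≤ m := by omega
  simp only [Nat.add_sub_cancel]
  set f : ℝ := (Nat.fib (m + 1) : ℝ) with hf
  set g : ℝ := (Nat.fib m : ℝ) with hg
  have hs : Real.sqrt 5 ^ 2 = 5 := Real.sq_sqrt (by norm_num)
  have hsqrt_pos : (0:ℝ) < Real.sqrt 5 := Real.sqrt_pos.mpr (by norm_num)
  have hsqrt_lt : Real.sqrt 5 < 7/3 := by
    nlinarith [Real.sq_sqrt (show (0:ℝ) ≤ 5 by norm_num)]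
  have hpsi_def : goldenConj = (1 - Real.sqrt 5) / 2 := rfl
  -- closed form
  have hkey : 5 * (S m : ℝ) + ((m:ℝ) + 1) * g + 2 * f = 2 * ((m:ℝ) + 1) * f := by
    have h := key m
    have h' := congrArg (fun x : ℕ => (x : ℝ)) h
    push_cast at h'
    linarith
  -- psi identity
  have hpsi : goldenConj * f + g = goldenConj ^ (m + 1) := by
    have h := fib_succ_sub_goldenRatio_mul_fib m
    have h2 : goldenConj * ((Nat.fib (m+1) : ℝ) - goldenRatio * (Nat.fib m : ℝ))
        = goldenConj * goldenConj ^ m := by rw [h]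
    rw [← pow_succ'] at h2
    have hmul : goldenConj * goldenRatio = -1 := goldenConj_mul_goldenRatio
    linear_combination h2 + g * hmul
  have hE : (E (m + 1) : ℝ) = (S m : ℝ) := by rw [E_eq_S]
  rw [hE]
  have hden : ((1 + Real.sqrt 5) / 2) ^ 2 + 1 = (5 + Real.sqrt 5) / 2 := by
    linear_combination hs / 4
  rw [hden]
  have hden_pos : (0:ℝ) < (5 + Real.sqrt 5) / 2 := by linarith
  have hSm : (S m : ℝ) = (2 * ((m:ℝ)+1) * f - ((m:ℝ)+1) * g - 2 * f) / 5 := by linarith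
  have hdiff : (S m : ℝ) - (↑(m + 1) : ℝ) * f / ((5 + Real.sqrt 5) / 2)
      = -(((m:ℝ) + 1) * goldenConj ^ (m + 1) + 2 * f) / 5 := by
    rw [hSm, ← hpsi, hpsi_def]
    have hne : (5 + Real.sqrt 5) ≠ 0 := by positivity
    push_cast
    field_simp
    linear_combination (-1 * ((m:ℝ) + 1) * f) * hs
  rw [hdiff]
  -- bounds
  have habs_psi : |goldenConj| ≤ 2/3 := by
    rw [abs_le, hpsi_def]
    constructor <;> [nlinarith; nlinarith]
  have hpow : ((m:ℝ) + 1) * |goldenConj| ^ (m + 1) ≤ 1 := by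
    have h1 : |goldenConj| ^ (m + 1) ≤ (2/3 : ℝ) ^ (m + 1) :=
      pow_le_pow_left₀ (abs_nonneg _) habs_psi _
    have h2 := pow_bound (m + 1) (by omega)
    push_cast at h2
    nlinarith [pow_nonneg (abs_nonneg goldenConj) (m+1)]
  have hf_le : f ≤ 2 * g := by
    obtain ⟨k, rfl⟩ : ∃ k, m = k + 2 := ⟨m - 2, by omega⟩
    have h1 : Nat.fib (k + 3) = Nat.fib (k + 1) + Nat.fib (k + 2) := Nat.fib_add_two
    have h2 : Nat.fib (k + 1) ≤ Nat.fib (k + 2) := Nat.fib_le_fib_succ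
    have h3 : Nat.fib (k + 3) ≤ 2 * Nat.fib (k + 2) := by omega
    rw [hf, hg]
    exact_mod_cast h3
  have hg_ge : (1:ℝ) ≤ g := by
    have : 1 ≤ Nat.fib m := Nat.fib_pos.mpr (by omega)
    rw [hg]; exact_mod_cast this
  have hf_nonneg : (0:ℝ) ≤ f := by rw [hf]; positivity
  have habs1 : |((m:ℝ) + 1) * goldenConj ^ (m + 1) + 2 * f|
      ≤ ((m:ℝ) + 1) * |goldenConj| ^ (m + 1) + 2 * f := by
    refine (abs_add_le _ _).trans ?_
    rw [abs_mul, abs_pow, abs_of_nonneg (show (0:ℝ) ≤ (m:ℝ) + 1 by positivity),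
      abs_of_nonneg (show (0:ℝ) ≤ 2 * f by positivity)]
  calc |(-(((m:ℝ) + 1) * goldenConj ^ (m + 1) + 2 * f)) / 5|
      ≤ (((m:ℝ) + 1) * |goldenConj| ^ (m + 1) + 2 * f) / 5 := by
        rw [abs_div, abs_neg, abs_of_pos (show (0:ℝ) < 5 by norm_num)]
        gcongr
    _ ≤ 1 * g := by
        rw [one_mul]
        linarith
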